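/- Let R be a topological ring with identity and let I₁, …, Iₙ be two-sided ideals of R that are pairwise co-maximal (Iₖ + Iₗ = R for all k ≠ l). Then the canonical ring homomorphism φ : R → ∏ₖ₌₁ⁿ R/Iₖ defined by φ(r) = (r + Iₖ)ₖ is an open map onto its image φ(R) (with the topology induced from the product of the quotient topologies). -/

import Mathlib

open Pointwise

/-- The quotient topology on the quotient of a topological ring by a ring congruence. -/
instance ringConQuotientTopology {R : Type*} [Ring R] [TopologicalSpace R] (c : RingCon R) :
    TopologicalSpace c.Quotient :=
  TopologicalSpace.coinduced c.mk' inferInstance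

/-- Products of elements each congruent to 1 mod I are congruent to 1 mod I. -/
lemma prod_sub_one_mem {R : Type*} [Ring R] (J : TwoSidedIdeal R) :
    ∀ (L : List R), (∀ x ∈ L, x - 1 ∈ J) → L.prod - 1 ∈ J := by
  intro L
  induction L with
  | nil => simp
  | cons a t ih =>
    intro hx
    have h1 : a * t.prod - 1 = a * (t.prod - 1) + (a - 1) := by rw [mul_sub, mul_one]; abel
    rw [List.prod_cons, h1]
    exact J.add_mem (J.mul_mem_left _ _ (ih fun x hx' => hx x (List.mem_cons_of_mem _ hx')))
      (hx a List.mem_cons_self)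

lemma prod_mem_of_mem {R : Type*} [Ring R] (J : TwoSidedIdeal R) :
    ∀ (L : List R), (∃ x ∈ L, x ∈ J) → L.prod ∈ J := by
  intro L
  induction L with
  | nil => rintro ⟨x, hx, -⟩; simp at hx
  | cons a t ih =>
    rintro ⟨x, hx, hxJ⟩
    rw [List.prod_cons]
    rcases List.mem_cons.mp hx with rfl | hx'
    · exact J.mul_mem_right _ _ hxJ
    · exact J.mul_mem_left _ _ (ih ⟨x, hx', hxJ⟩)

/-- CRT idempotent-like elements. -/
lemma exists_crt_elt {R : Type*} [Ring R] {n : ℕ} (I : Fin n → TwoSidedIdeal R)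
    (h : ∀ k l : Fin n, k ≠ l → (I k : Set R) + (I l : Set R) = Set.univ) (k : Fin n) :
    ∃ e : R, e - 1 ∈ I k ∧ ∀ l, l ≠ k → e ∈ I l := by
  have hb : ∀ l : Fin n, l ≠ k → ∃ b : R, b ∈ I l ∧ b - 1 ∈ I k := by
    intro l hl
    have h1 : (1 : R) ∈ (I k : Set R) + (I l : Set R) := by
      rw [h k l (Ne.symm hl)]; trivial
    rcases Set.mem_add.mp h1 with ⟨a, ha, b, hbm, hab⟩
    exact ⟨b, hbm, by
      have : b - 1 = -a := by rw [← hab]; abel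
      rw [this]; exact (I k).neg_mem ha⟩
  classical
  choose b hb1 hb2 using hb
  set L := (List.finRange n).filter (fun l => l ≠ k) with hL
  have hLm : ∀ l : Fin n, l ≠ k → l ∈ L := by
    intro l hl
    simp [hL, List.mem_filter, List.mem_finRange, hl]
  refine ⟨(L.attach.map (fun l => b l.1 (by
    have := l.2; simp [hL, List.mem_filter] at this; exact this))).prod, ?_, ?_⟩
  · apply prod_sub_one_mem
    intro x hx
    simp only [List.mem_map] at hx
    obtain ⟨l, -, rfl⟩ := hx
    exact hb2 _ _
  · intro l hl
    apply prod_mem_of_mem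
    refine ⟨b l hl, ?_, hb1 l hl⟩
    simp only [List.mem_map]
    exact ⟨⟨l, hLm l hl⟩, List.mem_attach _ _, rfl⟩

lemma mk'_eq_iff {R : Type*} [Ring R] (c : RingCon R) (a b : R) :
    c.mk' a = c.mk' b ↔ c a b := c.eq

lemma mk_isOpenMap {R : Type*} [Ring R] [TopologicalSpace R] [IsTopologicalRing R]
    (J : TwoSidedIdeal R) : IsOpenMap (J.ringCon.mk') := by
  intro V hV
  rw [isOpen_coinduced]
  have hset : J.ringCon.mk' ⁻¹' (J.ringCon.mk' '' V)
      = ⋃ w ∈ (J : Set R), (fun x => x + w) '' V := by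
    ext r
    simp only [Set.mem_preimage, Set.mem_image, Set.mem_iUnion]
    constructor
    · rintro ⟨v, hv, hveq⟩
      have : J.ringCon r v := (mk'_eq_iff _ _ _).mp hveq.symm
      rw [J.rel_iff] at this
      exact ⟨r - v, this, v, hv, by abel⟩
    · rintro ⟨w, hw, v, hv, rfl⟩
      refine ⟨v, hv, ?_⟩
      rw [mk'_eq_iff, J.rel_iff]
      simpa using J.neg_mem hw
  rw [hset]
  exact isOpen_biUnion fun w _ => (Homeomorph.addRight w).isOpenMap V hV

/-- Finite Chinese remainder approximation theorem (openness part): if `I 0, …, I (n-1)` are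
pairwise co-maximal two-sided ideals of a topological ring `R`, then the canonical
homomorphism `φ : R → ∏ k, R/I k` is open onto its image `φ(R)` (with the topology induced
from the product of the quotient topologies). -/
theorem finite_crat_open {R : Type*} [Ring R] [TopologicalSpace R] [IsTopologicalRing R]
    [T2Space R] {n : ℕ} (I : Fin n → TwoSidedIdeal R)
    (h : ∀ k l : Fin n, k ≠ l → (I k : Set R) + (I l : Set R) = Set.univ) :
    IsOpenMap (Set.rangeFactorization (fun r (k : Fin n) => (I k).ringCon.mk' r)) := by
  classical
  set φ : R → ∀ k : Fin n, (I k).ringCon.Quotient := fun r k => (I k).ringCon.mk' r with hφ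
  choose e he1 he2 using exists_crt_elt I h
  intro U hU
  -- choose a good neighborhood of 0 for each u ∈ U
  have key : ∀ u ∈ U, ∃ W : Set R, IsOpen W ∧ (0:R) ∈ W ∧
      ∀ v : Fin n → R, (∀ k, v k ∈ W) → u + ∑ k, e k * v k ∈ U := by
    intro u hu
    set g : (Fin n → R) → R := fun v => u + ∑ k, e k * v k with hg
    have hgc : Continuous g := by
      apply continuous_const.add
      exact continuous_finset_sum _ fun k _ => continuous_const.mul (continuous_apply k)
    have h0 : (0 : Fin n → R) ∈ g ⁻¹' U := by
      simp [hg, hu]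
    have hop : IsOpen (g ⁻¹' U) := hU.preimage hgc
    rcases isOpen_pi_iff.mp hop 0 h0 with ⟨t, ua, hta, hsub⟩
    refine ⟨⋂ a ∈ t, ua a, isOpen_biInter_finset fun a ha => (hta a ha).1,
      Set.mem_iInter₂.mpr fun a ha => (hta a ha).2, ?_⟩
    intro v hv
    exact hsub (fun a ha => Set.mem_iInter₂.mp (hv a) a ha)
  choose W hWo hW0 hWs using key
  set T : Set (∀ k : Fin n, (I k).ringCon.Quotient) :=
    ⋃ (u : R) (hu : u ∈ U),
      Set.pi Set.univ (fun k => (I k).ringCon.mk' '' ((fun x => u + x) '' W u hu)) with hT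
  have hTopen : IsOpen T := by
    apply isOpen_iUnion; intro u; apply isOpen_iUnion; intro hu
    exact isOpen_set_pi Set.finite_univ fun k _ =>
      mk_isOpenMap (I k) _ ((Homeomorph.addLeft u).isOpenMap _ (hWo u hu))
  have himg : Set.rangeFactorization φ '' U = Subtype.val ⁻¹' T := by
    ext x
    constructor
    · rintro ⟨u, hu, rfl⟩
      simp only [Set.mem_preimage, hT, Set.mem_iUnion]
      refine ⟨u, hu, fun k _ => ⟨u, ⟨0, hW0 u hu, by simp⟩, rfl⟩⟩
    · rintro hx
      obtain ⟨r, hr⟩ := x.2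
      simp only [Set.mem_preimage, hT, Set.mem_iUnion, Set.mem_pi] at hx
      obtain ⟨u, hu, hxk⟩ := hx
      have hv : ∀ k : Fin n, ∃ v ∈ W u hu, (I k).ringCon.mk' (u + v) = x.1 k := by
        intro k
        rcases hxk k trivial with ⟨y, ⟨v, hv, rfl⟩, hy⟩
        exact ⟨v, hv, hy⟩
      choose v hvW hveq using hv
      refine ⟨u + ∑ k, e k * v k, hWs u hu v hvW, ?_⟩
      apply Subtype.ext
      funext k
      have hmem : u + ∑ l, e l * v l - (u + v k) ∈ I k := by
        have heq : u + ∑ l, e l * v l - (u + v k)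
            = ∑ l, (e l * v l - if l = k then v k else 0) := by
          rw [Finset.sum_sub_distrib, Finset.sum_ite_eq' Finset.univ k (fun _ => v k)]
          simp only [Finset.mem_univ, if_true]
          abel
        rw [heq]
        apply sum_mem
        intro l _
        by_cases hlk : l = k
        · subst hlk
          simp only [if_true]
          have : e l * v l - v l = (e l - 1) * v l := by
            rw [sub_mul, one_mul]
          rw [this]
          exact (I l).mul_mem_right _ _ (he1 l)
        · simp only [hlk, if_false, sub_zero]
          exact (I k).mul_mem_right _ _ (he2 l k (Ne.symm hlk))
      have : (I k).ringCon.mk' (u + ∑ l, e l * v l) = (I k).ringCon.mk' (u + v k) := by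
        rw [mk'_eq_iff, (I k).rel_iff]
        exact hmem
      show φ (u + ∑ l, e l * v l) k = x.1 k
      rw [← hveq k]
      exact this
  have : IsOpen (Subtype.val ⁻¹' T : Set (Set.range φ)) :=
    hTopen.preimage continuous_subtype_val
  rw [himg]
  exact this
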